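/- Let γ = (r₁e_{i₁}) * ⋯ * (r_n e_{i_n}) be an axis path in ℝ^d with all r_k ≠ 0 and i_k ≠ i_{k+1} for k = 1,…,n−1, let w* = (i₁,…,i_n), and for k = 1,…,n let w*_k = (i₁,…,i_{k−1}, i_k, i_k, i_{k+1},…,i_n) be the word of length n+1 obtained from w* by repeating the k-th letter. Then the signature coefficients satisfy C_γ(w*_k) = (1/2) r₁ ⋯ r_{k−1} r_k² r_{k+1} ⋯ r_n, and consequently r_k = 2 C_γ(w*_k) / C_γ(w*); thus the axis path γ is completely reconstructed from its signature coefficients. -/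

import Mathlib

open MeasureTheory

/-- The signature coefficient of a path with (a.e.) derivative `D` over the time
interval `[s, t]`, at the word given as a list of letters in `Fin d`. -/
noncomputable def sigCoeff {d : ℕ} (D : ℝ → Fin d → ℝ) : List (Fin d) → ℝ → ℝ → ℝ
  | [], _, _ => 1
  | j :: w, s, t => ∫ u in s..t, D u j * sigCoeff D w u t

/-- The derivative of the axis path `(r₁ e_{i₁}) * ⋯ * (r_n e_{i_n})` parametrized on
`[0, n]`: on the interval `(k-1, k)` it equals `r_k e_{i_k}`. -/
noncomputable def axisDeriv {d n : ℕ} (r : Fin n → ℝ) (i : Fin n → Fin d) (u : ℝ)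
    (j : Fin d) : ℝ :=
  ∑ k : Fin n, if (k : ℝ) < u ∧ u < (k : ℝ) + 1 ∧ i k = j then r k else 0

section General

variable {d : ℕ} {D : ℝ → Fin d → ℝ} {B : ℝ}

lemma D_intable (hD : ∀ j, Measurable fun u => D u j) (hB : ∀ u j, |D u j| ≤ B)
    (j : Fin d) (a b : ℝ) : IntervalIntegrable (fun u => D u j) volume a b := by
  refine (intervalIntegrable_const (c := B)).mono_fun
    ((hD j).aestronglyMeasurable.restrict) ?_
  filter_upwards with u
  have := hB u j
  simp only [Real.norm_eq_abs]
  exact this.trans (le_abs_self B)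

lemma sig_cont (hD : ∀ j, Measurable fun u => D u j) (hB : ∀ u j, |D u j| ≤ B) :
    ∀ (w : List (Fin d)) (t : ℝ), Continuous (fun s => sigCoeff D w s t) := by
  intro w
  induction w with
  | nil => intro t; simp only [sigCoeff]; exact continuous_const
  | cons j w ih =>
    intro t
    have hint : ∀ a b, IntervalIntegrable (fun u => D u j * sigCoeff D w u t) volume a b :=
      fun a b => (D_intable hD hB j a b).mul_continuousOn (ih t).continuousOn
    have h1 : Continuous fun s => ∫ u in t..s, D u j * sigCoeff D w u t :=
      intervalIntegral.continuous_primitive hint t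
    have h2 : Continuous fun s => -(∫ u in t..s, D u j * sigCoeff D w u t) := h1.neg
    have : (fun s => sigCoeff D (j :: w) s t)
        = fun s => -(∫ u in t..s, D u j * sigCoeff D w u t) := by
      funext s
      simp only [sigCoeff]
      rw [intervalIntegral.integral_symm]
    rw [this]; exact h2

lemma sig_intable (hD : ∀ j, Measurable fun u => D u j) (hB : ∀ u j, |D u j| ≤ B)
    (j : Fin d) (w : List (Fin d)) (t a b : ℝ) :
    IntervalIntegrable (fun u => D u j * sigCoeff D w u t) volume a b :=
  (D_intable hD hB j a b).mul_continuousOn (sig_cont hD hB w t).continuousOn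

lemma sig_const (c : Fin d → ℝ) :
    ∀ (w : List (Fin d)) (s t : ℝ), s ≤ t → (∀ u ∈ Set.Ioo s t, ∀ j, D u j = c j) →
      sigCoeff D w s t = (w.map c).prod * (t - s) ^ w.length / Nat.factorial w.length := by
  intro w
  induction w with
  | nil => intro s t _ _; simp [sigCoeff]
  | cons j w ih =>
    intro s t hst hc
    have key : ∀ u ∈ Set.Ioo s t,
        D u j * sigCoeff D w u t
          = c j * (w.map c).prod / Nat.factorial w.length * (t - u) ^ w.length := by
      intro u hu
      rw [hc u hu j, ih u t (le_of_lt hu.2)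
        (fun v hv j' => hc v ⟨lt_trans hu.1 hv.1, hv.2⟩ j')]
      ring
    show (∫ u in s..t, D u j * sigCoeff D w u t) = _
    rw [intervalIntegral.integral_of_le hst, integral_Ioc_eq_integral_Ioo,
      setIntegral_congr_fun measurableSet_Ioo key,
      ← integral_Ioc_eq_integral_Ioo, ← intervalIntegral.integral_of_le hst,
      intervalIntegral.integral_const_mul]
    have hpow : (∫ u in s..t, (t - u) ^ w.length)
        = (t - s) ^ (w.length + 1) / (w.length + 1) := by
      rw [intervalIntegral.integral_comp_sub_left (fun x => x ^ w.length) t]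
      rw [integral_pow]
      simp
    rw [hpow]
    have h1 : ((Nat.factorial w.length : ℕ) : ℝ) ≠ 0 := Nat.cast_ne_zero.mpr (Nat.factorial_ne_zero _)
    have h2 : ((w.length : ℝ) + 1) ≠ 0 := by positivity
    simp only [List.map_cons, List.prod_cons, List.length_cons, Nat.factorial_succ]
    push_cast
    rw [div_mul_div_comm]
    ring_nf

lemma sig_chen (hD : ∀ j, Measurable fun u => D u j) (hB : ∀ u j, |D u j| ≤ B) :
    ∀ (w : List (Fin d)) (s m t : ℝ),
      sigCoeff D w s t = ∑ p ∈ Finset.range (w.length + 1),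
        sigCoeff D (w.take p) s m * sigCoeff D (w.drop p) m t := by
  intro w
  induction w with
  | nil => intro s m t; simp [sigCoeff]
  | cons j w ih =>
    intro s m t
    have hsplit : sigCoeff D (j :: w) s t
        = (∫ u in s..m, D u j * sigCoeff D w u t) + sigCoeff D (j :: w) m t :=
      (intervalIntegral.integral_add_adjacent_intervals
        (sig_intable hD hB j w t s m) (sig_intable hD hB j w t m t)).symm
    have h2 : (∫ u in s..m, D u j * sigCoeff D w u t)
        = ∑ p ∈ Finset.range (w.length + 1),
            sigCoeff D (j :: w.take p) s m * sigCoeff D (w.drop p) m t := by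
      have hpt : ∀ u, D u j * sigCoeff D w u t
          = ∑ p ∈ Finset.range (w.length + 1),
              (fun v => D v j * sigCoeff D (w.take p) v m * sigCoeff D (w.drop p) m t) u := by
        intro u
        simp only
        rw [ih u m t, Finset.mul_sum]
        exact Finset.sum_congr rfl fun p _ => by ring
      rw [intervalIntegral.integral_congr (fun u _ => hpt u),
        intervalIntegral.integral_finset_sum
          (fun p _ => (sig_intable hD hB j (w.take p) m s m).mul_const _)]
      refine Finset.sum_congr rfl fun p _ => ?_
      rw [intervalIntegral.integral_mul_const]
      rfl
    rw [hsplit, h2]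
    conv_rhs => rw [show (j :: w).length + 1 = w.length + 1 + 1 from rfl,
      Finset.sum_range_succ']
    simp only [List.take_succ_cons, List.drop_succ_cons, List.take_zero, List.drop_zero]
    have hnil : sigCoeff D ([] : List (Fin d)) s m = 1 := rfl
    rw [hnil, one_mul]
    try ring

end General
section Axis

variable {d n : ℕ} (r : Fin n → ℝ) (i : Fin n → Fin d)

lemma axis_meas : ∀ j, Measurable fun u => axisDeriv r i u j := by
  intro j
  unfold axisDeriv
  refine Finset.measurable_sum _ fun k _ => ?_
  by_cases h : i k = j
  · have hset : {u : ℝ | (k : ℝ) < u ∧ u < (k : ℝ) + 1 ∧ i k = j}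
        = Set.Ioo (k : ℝ) ((k : ℝ) + 1) := by
      ext u; simp [h, Set.mem_Ioo, and_assoc]
    exact Measurable.ite (hset ▸ measurableSet_Ioo) measurable_const measurable_const
  · have hset : {u : ℝ | (k : ℝ) < u ∧ u < (k : ℝ) + 1 ∧ i k = j} = ∅ := by
      ext u; simp [h]
    exact Measurable.ite (hset ▸ MeasurableSet.empty) measurable_const measurable_const

lemma axis_bound : ∀ u j, |axisDeriv r i u j| ≤ ∑ k, |r k| := by
  intro u j
  refine (Finset.abs_sum_le_sum_abs _ _).trans (Finset.sum_le_sum fun k _ => ?_)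
  split_ifs with h
  · exact le_rfl
  · simp

lemma axis_piece (m : ℕ) (hm : m < n) :
    ∀ u ∈ Set.Ioo (m : ℝ) ((m : ℝ) + 1), ∀ j,
      axisDeriv r i u j = (fun j => if i ⟨m, hm⟩ = j then r ⟨m, hm⟩ else 0) j := by
  intro u hu j
  unfold axisDeriv
  rw [Finset.sum_eq_single (⟨m, hm⟩ : Fin n)]
  · have h1 : ((⟨m, hm⟩ : Fin n) : ℝ) = (m : ℝ) := rfl
    rw [h1]
    simp only [hu.1, hu.2, true_and]
  · intro k _ hk
    rw [if_neg]
    rintro ⟨h1, h2, -⟩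
    apply hk
    have hk1 : ((k : ℕ) : ℝ) < (m : ℝ) + 1 := lt_trans h1 hu.2
    have hk2 : (m : ℝ) < ((k : ℕ) : ℝ) + 1 := lt_trans hu.1 h2
    have hk1' : (k : ℕ) < m + 1 := by exact_mod_cast hk1
    have hk2' : m < (k : ℕ) + 1 := by exact_mod_cast hk2
    have hv : (k : ℕ) = m := by omega
    exact Fin.ext hv
  · intro h; exact absurd (Finset.mem_univ _) h

def countAdj {d : ℕ} : List (Fin d) → ℕ
  | a :: b :: l => (if a = b then 1 else 0) + countAdj (b :: l)
  | _ => 0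

lemma countAdj_nil : countAdj ([] : List (Fin d)) = 0 := rfl

lemma countAdj_singleton (a : Fin d) : countAdj [a] = 0 := rfl

lemma countAdj_cons_cons (a b : Fin d) (l : List (Fin d)) :
    countAdj (a :: b :: l) = (if a = b then 1 else 0) + countAdj (b :: l) := rfl

lemma countAdj_le_cons (a : Fin d) (l : List (Fin d)) : countAdj l ≤ countAdj (a :: l) := by
  cases l with
  | nil => simp [countAdj_nil, countAdj_singleton]
  | cons b l => rw [countAdj_cons_cons]; omega

lemma countAdj_replicate_append (a : Fin d) (l : List (Fin d)) :
    ∀ p, 1 ≤ p → countAdj (List.replicate p a ++ l) = (p - 1) + countAdj (a :: l) := by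
  intro p
  induction p with
  | zero => omega
  | succ q ih =>
    intro _
    rcases Nat.eq_or_lt_of_le (Nat.one_le_iff_ne_zero.mpr (Nat.succ_ne_zero q)) with h | h
    · obtain rfl : q = 0 := by omega
      simp [List.replicate_one, countAdj_le_cons]
    · have hq : 1 ≤ q := by omega
      have hrep : List.replicate (q + 1) a ++ l = a :: (List.replicate q a ++ l) := by
        rw [List.replicate_succ]; rfl
      have hhead : List.replicate q a ++ l = a :: (List.replicate (q - 1) a ++ l) := by
        conv_lhs => rw [show q = (q - 1) + 1 by omega, List.replicate_succ]
        rw [List.cons_append]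
      rw [hrep, hhead, countAdj_cons_cons, if_pos rfl, ← hhead, ih hq]
      omega

end Axis
section Vanish

variable {d n : ℕ} (r : Fin n → ℝ) (i : Fin n → Fin d)

lemma sig_piece (m : ℕ) (hm : m < n) (w : List (Fin d)) :
    sigCoeff (axisDeriv r i) w (m : ℝ) ((m : ℝ) + 1)
      = (w.map (fun j => if i ⟨m, hm⟩ = j then r ⟨m, hm⟩ else 0)).prod
          / Nat.factorial w.length := by
  rw [sig_const _ w _ _ (by linarith) (axis_piece r i m hm)]
  simp

lemma sig_piece_bad (m : ℕ) (hm : m < n) (w : List (Fin d))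
    (hbad : ∃ x ∈ w, x ≠ i ⟨m, hm⟩) :
    sigCoeff (axisDeriv r i) w (m : ℝ) ((m : ℝ) + 1) = 0 := by
  rw [sig_piece r i m hm w]
  obtain ⟨x, hx, hxne⟩ := hbad
  have hz : (0 : ℝ) ∈ w.map (fun j => if i ⟨m, hm⟩ = j then r ⟨m, hm⟩ else 0) := by
    have h0 := List.mem_map_of_mem (f := fun j => if i ⟨m, hm⟩ = j then r ⟨m, hm⟩ else 0) hx
    simpa only [if_neg (fun h : i ⟨m, hm⟩ = x => hxne h.symm)] using h0
  rw [List.prod_eq_zero hz, zero_div]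

lemma sig_vanish :
    ∀ q (m : ℕ), m ≤ n → n - m = q → ∀ w : List (Fin d),
      (n - m) + countAdj w < w.length → sigCoeff (axisDeriv r i) w (m : ℝ) (n : ℝ) = 0 := by
  intro q
  induction q with
  | zero =>
    intro m hm hq w hw
    obtain rfl : m = n := by omega
    match w with
    | [] => simp at hw
    | j :: w' =>
      show (∫ u in (m : ℝ)..(m : ℝ), _) = 0
      exact intervalIntegral.integral_same
  | succ q ihq =>
    intro m hm hq w hw
    have hmn : m < n := by omega
    rw [sig_chen (axis_meas r i) (axis_bound r i) w (m : ℝ) ((m : ℝ) + 1) (n : ℝ)]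
    apply Finset.sum_eq_zero
    intro p hp
    have hp' : p ≤ w.length := by
      have := Finset.mem_range.mp hp; omega
    by_cases hall : ∀ x ∈ w.take p, x = i ⟨m, hmn⟩
    · -- second factor vanishes
      have hdrop : sigCoeff (axisDeriv r i) (w.drop p) ((m : ℝ) + 1) (n : ℝ) = 0 := by
        have hcast : ((m : ℝ) + 1) = ((m + 1 : ℕ) : ℝ) := by push_cast; ring
        rw [hcast]
        rcases Nat.eq_zero_or_pos p with rfl | hp1
        · exact ihq (m + 1) (by omega) (by omega) _
            (by rw [List.drop_zero]; omega)
        · have heq : w.take p = List.replicate p (i ⟨m, hmn⟩) := by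
            have hl : (w.take p).length = p := by
              rw [List.length_take]; omega
            have := List.eq_replicate_length.mpr hall
            rwa [hl] at this
          have hAdj : (p - 1) + countAdj (w.drop p) ≤ countAdj w := by
            conv_rhs => rw [← List.take_append_drop p w, heq]
            rw [countAdj_replicate_append _ _ p hp1]
            have := countAdj_le_cons (i ⟨m, hmn⟩) (w.drop p)
            omega
          refine ihq (m + 1) (by omega) (by omega) _ ?_
          rw [List.length_drop]
          omega
      rw [hdrop, mul_zero]
    · push_neg at hall
      rw [sig_piece_bad r i m hmn (w.take p) hall, zero_mul]

end Vanish
section Word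

variable {d n : ℕ} (r : Fin n → ℝ) (i : Fin n → Fin d)

lemma drop_ofFn_cons {α : Type*} (f : Fin n → α) (m : ℕ) (hm : m < n) :
    (List.ofFn f).drop m = f ⟨m, hm⟩ :: (List.ofFn f).drop (m + 1) := by
  rw [List.drop_eq_getElem_cons (by rw [List.length_ofFn]; exact hm), List.getElem_ofFn]

lemma countAdj_drop_ofFn
    (hi : ∀ (k : ℕ) (h : k + 1 < n), i ⟨k, by omega⟩ ≠ i ⟨k + 1, h⟩) :
    ∀ q m, n - m = q → countAdj ((List.ofFn i).drop m) = 0 := by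
  intro q
  induction q with
  | zero =>
    intro m hq
    rw [List.drop_eq_nil_of_le (by rw [List.length_ofFn]; omega)]
    rfl
  | succ q ihq =>
    intro m hq
    have hmn : m < n := by omega
    rw [drop_ofFn_cons i m hmn]
    by_cases hmn2 : m + 1 < n
    · rw [drop_ofFn_cons i (m + 1) hmn2, countAdj_cons_cons,
        if_neg (hi m hmn2), ← drop_ofFn_cons i (m + 1) hmn2, ihq (m + 1) (by omega)]
    · rw [List.drop_eq_nil_of_le (by rw [List.length_ofFn]; omega)]
      rfl

lemma sig_single (m : ℕ) (hm : m < n) :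
    sigCoeff (axisDeriv r i) [i ⟨m, hm⟩] (m : ℝ) ((m : ℝ) + 1) = r ⟨m, hm⟩ := by
  rw [sig_piece r i m hm]
  simp

lemma sig_word
    (hi : ∀ (k : ℕ) (h : k + 1 < n), i ⟨k, by omega⟩ ≠ i ⟨k + 1, h⟩) :
    ∀ q m, m ≤ n → n - m = q →
      sigCoeff (axisDeriv r i) ((List.ofFn i).drop m) (m : ℝ) (n : ℝ)
        = ((List.ofFn r).drop m).prod := by
  intro q
  induction q with
  | zero =>
    intro m hm hq
    obtain rfl : m = n := by omega
    rw [List.drop_eq_nil_of_le (by simp), List.drop_eq_nil_of_le (by simp)]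
    simp [sigCoeff]
  | succ q ihq =>
    intro m hm hq
    have hmn : m < n := by omega
    have hcast : ((m : ℝ) + 1) = ((m + 1 : ℕ) : ℝ) := by push_cast; ring
    have hlen : ((List.ofFn i).drop m).length = n - m := by simp
    rw [sig_chen (axis_meas r i) (axis_bound r i) _ (m : ℝ) ((m : ℝ) + 1) (n : ℝ)]
    rw [Finset.sum_eq_single_of_mem 1 (Finset.mem_range.mpr (by omega))]
    · rw [drop_ofFn_cons i m hmn]
      simp only [List.take_succ_cons, List.take_zero, List.drop_succ_cons, List.drop_zero]
      rw [sig_single r i m hmn, hcast, ihq (m + 1) (by omega) (by omega),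
        drop_ofFn_cons r m hmn, List.prod_cons]
    · intro p hp hne
      have hp' : p ≤ n - m := by
        have := Finset.mem_range.mp hp; omega
      rcases Nat.eq_zero_or_pos p with rfl | hp1
      · rw [List.drop_zero]
        rw [show sigCoeff (axisDeriv r i) ((List.ofFn i).drop m) ((m:ℝ)+1) (n:ℝ) = 0 from ?_,
          mul_zero]
        rw [hcast]
        exact sig_vanish r i (n - (m + 1)) (m + 1) (by omega) rfl _
          (by rw [hlen, countAdj_drop_ofFn i hi (n - m) m rfl]; omega)
      · have hp2 : 2 ≤ p := by omega
        have hmn2 : m + 1 < n := by omega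
        have hbad : ∃ x ∈ ((List.ofFn i).drop m).take p, x ≠ i ⟨m, hmn⟩ := by
          refine ⟨i ⟨m + 1, hmn2⟩, ?_, (hi m hmn2).symm⟩
          obtain ⟨p', rfl⟩ : ∃ p', p = p' + 2 := ⟨p - 2, by omega⟩
          rw [drop_ofFn_cons i m hmn, drop_ofFn_cons i (m + 1) hmn2]
          simp [List.take_succ_cons]
        rw [sig_piece_bad r i m hmn _ hbad, zero_mul]

end Word
section Double

variable {d n : ℕ} (r : Fin n → ℝ) (i : Fin n → Fin d)

lemma W_cons (k : Fin n) (m : ℕ) (hm : m ≤ (k : ℕ)) :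
    ((List.ofFn i).take ((k : ℕ) + 1)).drop m ++ (List.ofFn i).drop (k : ℕ)
      = i ⟨m, by omega⟩
          :: (((List.ofFn i).take ((k : ℕ) + 1)).drop (m + 1)
                ++ (List.ofFn i).drop (k : ℕ)) := by
  have hlt : m < (((List.ofFn i).take ((k : ℕ) + 1))).length := by
    simp [List.length_take]
    omega
  rw [List.drop_eq_getElem_cons hlt, List.cons_append]
  congr 1
  rw [List.getElem_take, List.getElem_ofFn]

lemma W_last (k : Fin n) :
    ((List.ofFn i).take ((k : ℕ) + 1)).drop (k : ℕ) ++ (List.ofFn i).drop (k : ℕ)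
      = i k :: i k :: (List.ofFn i).drop ((k : ℕ) + 1) := by
  rw [W_cons i k (k : ℕ) le_rfl]
  rw [List.drop_eq_nil_of_le (by simp [List.length_take]), List.nil_append]
  rw [drop_ofFn_cons i (k : ℕ) k.isLt]

lemma W_length (k : Fin n) (m : ℕ) (hm : m ≤ (k : ℕ)) :
    (((List.ofFn i).take ((k : ℕ) + 1)).drop m ++ (List.ofFn i).drop (k : ℕ)).length
      = n - m + 1 := by
  have := k.isLt
  simp [List.length_take]
  omega

lemma countAdj_kdrop
    (hi : ∀ (k : ℕ) (h : k + 1 < n), i ⟨k, by omega⟩ ≠ i ⟨k + 1, h⟩) (k : Fin n) :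
    countAdj (i k :: (List.ofFn i).drop ((k : ℕ) + 1)) = 0 := by
  by_cases h2 : (k : ℕ) + 1 < n
  · rw [drop_ofFn_cons i _ h2, countAdj_cons_cons, if_neg (hi (k : ℕ) h2),
      ← drop_ofFn_cons i _ h2, countAdj_drop_ofFn i hi _ _ rfl]
  · rw [List.drop_eq_nil_of_le (by simp; omega)]
    rfl

lemma countAdj_W
    (hi : ∀ (k : ℕ) (h : k + 1 < n), i ⟨k, by omega⟩ ≠ i ⟨k + 1, h⟩) (k : Fin n) :
    ∀ q m, m ≤ (k : ℕ) → (k : ℕ) - m = q →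
      countAdj (((List.ofFn i).take ((k : ℕ) + 1)).drop m ++ (List.ofFn i).drop (k : ℕ))
        = 1 := by
  intro q
  induction q with
  | zero =>
    intro m hm hq
    obtain rfl : m = (k : ℕ) := by omega
    rw [W_last i k, countAdj_cons_cons, if_pos rfl, countAdj_kdrop i hi k]
  | succ q ihq =>
    intro m hm hq
    have hmk : m < (k : ℕ) := by omega
    rw [W_cons i k m hm, W_cons i k (m + 1) (by omega), countAdj_cons_cons,
      if_neg (hi m (by have := k.isLt; omega)), ← W_cons i k (m + 1) (by omega),
      ihq (m + 1) (by omega) (by omega)]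

end Double
section DoubleMain

variable {d n : ℕ} (r : Fin n → ℝ) (i : Fin n → Fin d)

lemma sig_double
    (hi : ∀ (k : ℕ) (h : k + 1 < n), i ⟨k, by omega⟩ ≠ i ⟨k + 1, h⟩) (k : Fin n) :
    ∀ q m, m ≤ (k : ℕ) → (k : ℕ) - m = q →
      sigCoeff (axisDeriv r i)
          (((List.ofFn i).take ((k : ℕ) + 1)).drop m ++ (List.ofFn i).drop (k : ℕ))
          (m : ℝ) (n : ℝ)
        = (1 / 2) * r k * ((List.ofFn r).drop m).prod := by
  intro q
  induction q with
  | zero =>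
    intro m hm hq
    obtain rfl : m = (k : ℕ) := by omega
    have hkn : (k : ℕ) < n := k.isLt
    have hcast : (((k : ℕ) : ℝ) + 1) = (((k : ℕ) + 1 : ℕ) : ℝ) := by push_cast; ring
    rw [W_last i k]
    rw [sig_chen (axis_meas r i) (axis_bound r i) _ ((k : ℕ) : ℝ) (((k : ℕ) : ℝ) + 1) (n : ℝ)]
    have hlen : (i k :: i k :: (List.ofFn i).drop ((k : ℕ) + 1)).length = n - (k : ℕ) + 1 := by
      simp; omega
    rw [Finset.sum_eq_single_of_mem 2 (Finset.mem_range.mpr (by rw [hlen]; omega))]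
    · simp only [List.take_succ_cons, List.take_zero, List.drop_succ_cons, List.drop_zero]
      have h1 : sigCoeff (axisDeriv r i) [i k, i k] ((k : ℕ) : ℝ) (((k : ℕ) : ℝ) + 1)
          = r k * r k / 2 := by
        rw [sig_piece r i (k : ℕ) hkn]
        norm_num [Fin.eta]
      rw [h1, hcast, sig_word r i hi (n - ((k : ℕ) + 1)) ((k : ℕ) + 1) (by omega) rfl,
        drop_ofFn_cons r (k : ℕ) hkn]
      rw [List.prod_cons]
      have : r ⟨(k : ℕ), hkn⟩ = r k := by rw [Fin.eta]
      rw [this]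
      ring
    · intro p hp hne
      have hp' : p ≤ n - (k : ℕ) + 1 := by
        have := Finset.mem_range.mp hp; rw [hlen] at this; omega
      match p, hne with
      | 0, _ =>
        rw [List.drop_zero, List.take_zero,
          show sigCoeff (axisDeriv r i) (i k :: i k :: (List.ofFn i).drop ((k : ℕ) + 1))
              (((k : ℕ) : ℝ) + 1) (n : ℝ) = 0 from ?_, mul_zero]
        rw [hcast]
        refine sig_vanish r i (n - ((k : ℕ) + 1)) ((k : ℕ) + 1) (by omega) rfl _ ?_
        rw [hlen, countAdj_cons_cons, if_pos rfl, countAdj_kdrop i hi k]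
        omega
      | 1, _ =>
        rw [show sigCoeff (axisDeriv r i)
              ((i k :: i k :: (List.ofFn i).drop ((k : ℕ) + 1)).drop 1)
              (((k : ℕ) : ℝ) + 1) (n : ℝ) = 0 from ?_, mul_zero]
        rw [List.drop_succ_cons, List.drop_zero, hcast]
        refine sig_vanish r i (n - ((k : ℕ) + 1)) ((k : ℕ) + 1) (by omega) rfl _ ?_
        rw [countAdj_kdrop i hi k]
        simp only [List.length_cons, List.length_drop, List.length_ofFn]
        omega
      | (p' + 2 + 1), _ =>
        have hk2 : (k : ℕ) + 1 < n := by omega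
        have hbad : ∃ x ∈ (i k :: i k :: (List.ofFn i).drop ((k : ℕ) + 1)).take (p' + 3),
            x ≠ i ⟨(k : ℕ), hkn⟩ := by
          refine ⟨i ⟨(k : ℕ) + 1, hk2⟩, ?_, (hi (k : ℕ) hk2).symm⟩
          rw [drop_ofFn_cons i ((k : ℕ) + 1) hk2]
          simp [List.take_succ_cons]
        rw [sig_piece_bad r i (k : ℕ) hkn _ hbad, zero_mul]
  | succ q ihq =>
    intro m hm hq
    have hmk : m < (k : ℕ) := by omega
    have hmn : m < n := by have := k.isLt; omega
    have hm1n : m + 1 < n := by have := k.isLt; omega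
    have hcast : ((m : ℝ) + 1) = ((m + 1 : ℕ) : ℝ) := by push_cast; ring
    rw [sig_chen (axis_meas r i) (axis_bound r i) _ (m : ℝ) ((m : ℝ) + 1) (n : ℝ)]
    have hlen : (((List.ofFn i).take ((k : ℕ) + 1)).drop m
        ++ (List.ofFn i).drop (k : ℕ)).length = n - m + 1 := W_length i k m hm
    rw [Finset.sum_eq_single_of_mem 1 (Finset.mem_range.mpr (by rw [hlen]; omega))]
    · rw [W_cons i k m hm]
      simp only [List.take_succ_cons, List.take_zero, List.drop_succ_cons, List.drop_zero]
      rw [sig_single r i m hmn, hcast,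
        ihq (m + 1) (by omega) (by omega), drop_ofFn_cons r m hmn, List.prod_cons]
      ring
    · intro p hp hne
      have hp' : p ≤ n - m + 1 := by
        have := Finset.mem_range.mp hp; rw [hlen] at this; omega
      match p, hne with
      | 0, _ =>
        rw [List.drop_zero, List.take_zero,
          show sigCoeff (axisDeriv r i)
              (((List.ofFn i).take ((k : ℕ) + 1)).drop m ++ (List.ofFn i).drop (k : ℕ))
              ((m : ℝ) + 1) (n : ℝ) = 0 from ?_, mul_zero]
        rw [hcast]
        refine sig_vanish r i (n - (m + 1)) (m + 1) (by omega) rfl _ ?_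
        rw [hlen, countAdj_W i hi k ((k : ℕ) - m) m hm rfl]
        omega
      | (p' + 1), hne =>
        have hp1 : 1 ≤ p' + 1 := by omega
        have hp2 : 2 ≤ p' + 1 := by omega
        have hbad : ∃ x ∈ (((List.ofFn i).take ((k : ℕ) + 1)).drop m
            ++ (List.ofFn i).drop (k : ℕ)).take (p' + 1), x ≠ i ⟨m, hmn⟩ := by
          refine ⟨i ⟨m + 1, hm1n⟩, ?_, (hi m hm1n).symm⟩
          obtain ⟨p'', rfl⟩ : ∃ p'', p' = p'' + 1 := ⟨p' - 1, by omega⟩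
          rw [W_cons i k m hm, W_cons i k (m + 1) (by omega)]
          simp [List.take_succ_cons]
        rw [sig_piece_bad r i m hmn _ hbad, zero_mul]

end DoubleMain
/-- For the axis path `γ = (r₁ e_{i₁}) * ⋯ * (r_n e_{i_n})` (with all `r_k ≠ 0` and adjacent
directions distinct), let `w* = (i₁, …, i_n)` and let `w*_k` be the word of length `n+1`
obtained from `w*` by repeating the `k`-th letter.  Then
`C_γ(w*_k) = ½ r₁ ⋯ r_{k-1} r_k² r_{k+1} ⋯ r_n`, and consequently
`r_k = 2 C_γ(w*_k) / C_γ(w*)`: the axis path is reconstructed from its signature. -/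
theorem axis_path_reconstruction
    {d n : ℕ} (hd : 0 < d) (hn : 0 < n) (r : Fin n → ℝ) (i : Fin n → Fin d)
    (hr : ∀ k, r k ≠ 0)
    (hi : ∀ (k : ℕ) (h : k + 1 < n), i ⟨k, by omega⟩ ≠ i ⟨k + 1, h⟩)
    (k : Fin n) :
    sigCoeff (axisDeriv r i) ((List.ofFn i).take (k + 1) ++ (List.ofFn i).drop k) 0 n
        = (1 / 2) * r k * ∏ j, r j ∧
      r k = 2 * sigCoeff (axisDeriv r i)
              ((List.ofFn i).take (k + 1) ++ (List.ofFn i).drop k) 0 n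
            / sigCoeff (axisDeriv r i) (List.ofFn i) 0 n := by
  have h1 := sig_double r i hi k ((k : ℕ) - 0) 0 (Nat.zero_le _) rfl
  rw [List.drop_zero, List.drop_zero, Nat.cast_zero, List.prod_ofFn] at h1
  have h2 := sig_word r i hi (n - 0) 0 (Nat.zero_le _) rfl
  rw [List.drop_zero, List.drop_zero, Nat.cast_zero, List.prod_ofFn] at h2
  have hP : (∏ j, r j) ≠ 0 := Finset.prod_ne_zero_iff.mpr fun j _ => hr j
  refine ⟨h1, ?_⟩
  rw [h1, h2]
  field_simp
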